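/- Let f : ℝ⁺ → ℝ⁺ be an increasing diverging function and let g₀ ∈ G be an f-divergent element for some non-elementary isometric action of G on a geodesic Gromov hyperbolic space X. Then g₀ is a loxodromic WPD element for this action on X. -/

import Mathlib

open MeasureTheory Filter
open scoped ENNReal

noncomputable section

namespace RandomDivergence

variable {G : Type*} [Group G]

/-- Word length of `g` with respect to the finite set `S` (inverses of generators allowed). -/
def wordLength (S : Finset G) (g : G) : ℕ :=
  sInf {n : ℕ | ∃ l : List G, l.length = n ∧ (∀ x ∈ l, x ∈ S ∨ x⁻¹ ∈ S) ∧ l.prod = g}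

/-- The word metric on `G` with respect to the finite generating set `S`. -/
def wdist (S : Finset G) (g h : G) : ℝ := (wordLength S (g⁻¹ * h) : ℝ)

/-- Distance from a point to a subset of `G` in the word metric. -/
def wdistSet (S : Finset G) (g : G) (A : Set G) : ℝ := sInf (wdist S g '' A)

/-- A discrete path in the Cayley graph of `(G,S)` from `a` to `b`: a nonempty sequence of
points starting at `a`, ending at `b`, with consecutive points at word distance at most 1. -/
structure IsPath (S : Finset G) (α : List G) (a b : G) : Prop where
  ne : α ≠ []
  head : α.head? = some a
  last : α.getLast? = some b
  chain : α.Chain' fun u v => wdist S u v ≤ 1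

/-- Length (number of steps) of a discrete path. -/
def pathLength (α : List G) : ℝ := (α.length : ℝ) - 1

/-- `div S a b c δ` is the infimum of lengths of discrete paths from `a` to `b` in the Cayley
graph of `(G,S)` avoiding the ball of radius `δ · d(c,{a,b})` around `c`; it is `∞` if no
such path exists. -/
def div (S : Finset G) (a b c : G) (δ : ℝ) : ℝ≥0∞ :=
  sInf {L : ℝ≥0∞ | ∃ α : List G, IsPath S α a b ∧
    (∀ p ∈ α, δ * min (wdist S c a) (wdist S c b) ≤ wdist S c p) ∧
    L = ENNReal.ofReal (pathLength α)}

/-- The Gromov product `(x , y)_z`. -/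
def gromov {X : Type*} [MetricSpace X] (z x y : X) : ℝ := (dist x z + dist y z - dist x y) / 2

/-- A Gromov hyperbolic metric space (four point condition). -/
def IsHypSpace (X : Type*) [MetricSpace X] : Prop :=
  ∃ δ : ℝ, 0 ≤ δ ∧ ∀ x y z w : X, min (gromov w x z) (gromov w z y) - δ ≤ gromov w x y

/-- `c` parametrises a geodesic segment from `x` to `y`. -/
def IsGeodesicSegment {X : Type*} [MetricSpace X] (c : ℝ → X) (x y : X) : Prop :=
  c 0 = x ∧ c (dist x y) = y ∧
    ∀ s ∈ Set.Icc (0:ℝ) (dist x y), ∀ t ∈ Set.Icc (0:ℝ) (dist x y),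
      dist (c s) (c t) = |s - t|

/-- A geodesic metric space. -/
def IsGeodesicSpace (X : Type*) [MetricSpace X] : Prop :=
  ∀ x y : X, ∃ c : ℝ → X, IsGeodesicSegment c x y

/-- The action of `G` on `X` is by isometries. -/
def IsIsometricAction (G : Type*) (X : Type*) [Group G] [MetricSpace X] [MulAction G X] :
    Prop :=
  ∀ (g : G) (x y : X), dist (g • x) (g • y) = dist x y

/-- `g` is loxodromic: `n ↦ gⁿ • x0` is a quasi-isometric embedding of `ℤ` into `X`. -/
def IsLoxodromic {X : Type*} [MetricSpace X] [MulAction G X] (g : G) (x0 : X) : Prop :=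
  ∃ a : ℝ, 0 < a ∧ ∃ b : ℝ, ∀ m n : ℤ,
    a⁻¹ * |(m : ℝ) - (n : ℝ)| - b ≤ dist (g ^ m • x0) (g ^ n • x0) ∧
      dist (g ^ m • x0) (g ^ n • x0) ≤ a * |(m : ℝ) - (n : ℝ)| + b

/-- A group is virtually cyclic if it has a cyclic subgroup of finite index. -/
def VirtuallyCyclic (G : Type*) [Group G] : Prop :=
  ∃ H : Subgroup G, H.FiniteIndex ∧ IsCyclic ↥H

/-- The action is non-elementary: unbounded orbits and `G` not virtually cyclic. -/
def NonElementaryAction (G : Type*) [Group G] {X : Type*} [MetricSpace X] [MulAction G X]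
    (x0 : X) : Prop :=
  (∀ R : ℝ, ∃ g : G, R < dist x0 (g • x0)) ∧ ¬ VirtuallyCyclic G

/-- The action of `G` on `X` is acylindrical. -/
def AcylindricalAction (G : Type*) (X : Type*) [Group G] [MetricSpace X] [MulAction G X] :
    Prop :=
  ∀ ε : ℝ, 0 < ε → ∃ (R : ℝ) (N : ℕ), 0 < R ∧
    ∀ x y : X, R ≤ dist x y →
      {g : G | dist x (g • x) ≤ ε ∧ dist y (g • y) ≤ ε}.encard ≤ (N : ℕ∞)

/-- `g` satisfies the weak proper discontinuity (WPD) condition. -/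
def IsWPD {X : Type*} [MetricSpace X] [MulAction G X] (g : G) : Prop :=
  ∀ κ : ℝ, 0 < κ → ∀ x : X, ∃ N : ℕ,
    {h : G | dist x (h • x) < κ ∧ dist (g ^ N • x) (h • g ^ N • x) < κ}.Finite

/-- An increasing diverging function `ℝ⁺ → ℝ⁺`. -/
structure DivergingFun (f : ℝ → ℝ) : Prop where
  mono : Monotone f
  tendsto_atTop : Tendsto f atTop atTop
  nonneg : ∀ x : ℝ, 0 ≤ x → 0 ≤ f x

/-- `π : G → ⟨g⟩` is an `X`-projection: `π h • x0` is a closest point of the orbit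
`⟨g⟩ • x0` to `h • x0`. -/
def IsXProj {X : Type*} [MetricSpace X] [MulAction G X] (x0 : X) (g : G) (π : G → G) : Prop :=
  ∀ h : G, π h ∈ Subgroup.zpowers g ∧
    ∀ z ∈ Subgroup.zpowers g, dist (π h • x0) (h • x0) ≤ dist (z • x0) (h • x0)

/-- The defining inequality of an `f`-divergent element `g`, with divergence constant `θ`
and `X`-projection `π`: any discrete path between points whose projections to `⟨g⟩` are at
word distance at least `θ`, staying outside the `d`-neighbourhood of `⟨g⟩`, has length at
least `f d`. -/
def FDivergentWith (S : Finset G) {X : Type*} [MetricSpace X] [MulAction G X] (x0 : X)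
    (f : ℝ → ℝ) (g : G) (θ : ℝ) (π : G → G) : Prop :=
  IsXProj x0 g π ∧
    ∀ x y : G, θ ≤ wdist S (π x) (π y) →
      ∀ d : ℝ, 0 < d → ∀ α : List G, IsPath S α x y →
        (∀ p ∈ α, ∀ z ∈ Subgroup.zpowers g, d ≤ wdist S p z) →
        f d ≤ pathLength α

/-- `g` is an `f`-divergent element (for the given action with basepoint `x0`). -/
def IsFDivergent (S : Finset G) {X : Type*} [MetricSpace X] [MulAction G X] (x0 : X)
    (f : ℝ → ℝ) (g : G) : Prop :=
  IsLoxodromic g x0 ∧ ∃ (θ : ℝ) (π : G → G), FDivergentWith S x0 f g θ π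

/-- `γ = E(g)` is the elementary closure of `g`: the unique maximal virtually cyclic
subgroup containing `g`. -/
def IsElementaryClosure (g : G) (γ : Subgroup G) : Prop :=
  g ∈ γ ∧ VirtuallyCyclic ↥γ ∧ ∀ γ' : Subgroup G, g ∈ γ' → VirtuallyCyclic ↥γ' → γ' ≤ γ

/-- The left coset of `γ` corresponding to `c : G ⧸ γ`, as a subset of `G`. -/
def cosetOf (γ : Subgroup G) (c : G ⧸ γ) : Set G :=
  {g : G | (QuotientGroup.mk g : G ⧸ γ) = c}

/-- Diameter in `X` of the image of a subset of `G` under the orbit map. -/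
def XDiam {X : Type*} [MetricSpace X] [MulAction G X] (x0 : X) (A : Set G) : ℝ :=
  sSup {r : ℝ | ∃ a ∈ A, ∃ b ∈ A, r = dist (a • x0) (b • x0)}

/-- A system of strong-Behrstock projections onto the cosets of `γ`: projections of
uniformly bounded diameter `B`, within Hausdorff distance `B` of closest-point projection
to the orbit of the coset, satisfying the strong Behrstock inequality. -/
structure ProjSystem (G : Type*) (X : Type*) [Group G] [MetricSpace X] [MulAction G X]
    (x0 : X) (γ : Subgroup G) where
  π : G ⧸ γ → G → Set G
  B : ℝ
  B_pos : 0 < B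
  mem_coset : ∀ (c : G ⧸ γ) (x : G), π c x ⊆ cosetOf γ c
  nonempty : ∀ (c : G ⧸ γ) (x : G), (π c x).Nonempty
  diam_le : ∀ (c : G ⧸ γ) (x : G), XDiam x0 (π c x) ≤ B
  closest : ∀ (c : G ⧸ γ) (p : G), ∃ q ∈ cosetOf γ c,
    (∀ r ∈ cosetOf γ c, dist (q • x0) (p • x0) ≤ dist (r • x0) (p • x0)) ∧
      ∀ a ∈ π c p, dist (a • x0) (q • x0) ≤ B
  behrstock : ∀ c c' : G ⧸ γ, c ≠ c' → ∀ x : G,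
    B < XDiam x0 (π c x ∪ ⋃ y ∈ cosetOf γ c', π c y) →
      π c' x = ⋃ y ∈ cosetOf γ c, π c' y

variable {X : Type*} [MetricSpace X] [MulAction G X] {x0 : X} {γ : Subgroup G}

/-- The projection distance `d_{hγ}(x,y) = diam (π_{hγ}(x) ∪ π_{hγ}(y))`. -/
def ProjSystem.dproj (P : ProjSystem G X x0 γ) (c : G ⧸ γ) (x y : G) : ℝ :=
  XDiam x0 (P.π c x ∪ P.π c y)

/-- `H_T(x,y)`: the set of cosets of `γ` on which `x` and `y` have projection
distance at least `T`. -/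
def ProjSystem.HT (P : ProjSystem G X x0 γ) (T : ℝ) (x y : G) : Set (G ⧸ γ) :=
  {c | T ≤ P.dproj c x y}

/-- `A^r_{x,y}`: cosets of `H_T(x,y)` whose projection of `x` lies in the ball `B(x,r)`. -/
def ProjSystem.ASet (P : ProjSystem G X x0 γ) (S : Finset G) (T r : ℝ) (x y : G) :
    Set (G ⧸ γ) :=
  P.HT T x y ∩ {c | ∀ a ∈ P.π c x, wdist S x a ≤ r}

/-- The projections are `L`-coarsely Lipschitz. -/
def ProjSystem.CoarseLip (P : ProjSystem G X x0 γ) (S : Finset G) (L : ℝ) : Prop :=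
  ∀ (c : G ⧸ γ) (x y : G), P.dproj c x y ≤ L * wdist S x y + L

section Probability

variable {Ω : Type*} [MeasureSpace Ω]

/-- `w` is the random walk on `G` driven by `μ`: the increments are i.i.d. of law `μ`. -/
def IsRandomWalk [MeasurableSpace G] (μ : Measure G) (w : ℕ → Ω → G) : Prop :=
  ∃ inc : ℕ → Ω → G, (∀ i, Measurable (inc i)) ∧
    ProbabilityTheory.iIndepFun inc (volume : Measure Ω) ∧
    (∀ i, Measure.map (inc i) (volume : Measure Ω) = μ) ∧
    ∀ (n : ℕ) (ω : Ω), w n ω = ((List.range n).map fun i => inc i ω).prod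

/-- `w` and `z` are two independent copies of the random walk driven by `μ`. -/
def AreIndepRandomWalks [MeasurableSpace G] (μ : Measure G) (w z : ℕ → Ω → G) : Prop :=
  ∃ inc : ℕ ⊕ ℕ → Ω → G, (∀ i, Measurable (inc i)) ∧
    ProbabilityTheory.iIndepFun inc (volume : Measure Ω) ∧
    (∀ i, Measure.map (inc i) (volume : Measure Ω) = μ) ∧
    (∀ (n : ℕ) (ω : Ω), w n ω = ((List.range n).map fun i => inc (Sum.inl i) ω).prod) ∧
    (∀ (n : ℕ) (ω : Ω), z n ω = ((List.range n).map fun i => inc (Sum.inr i) ω).prod)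

/-- `μ` has finite support generating `G` as a semigroup. -/
def FinSuppGen [MeasurableSpace G] (μ : Measure G) : Prop :=
  (Function.support fun g : G => μ {g}).Finite ∧
    Subsemigroup.closure {g : G | μ {g} ≠ 0} = ⊤

/-- `w : G → ℕ → Ω → G` is a (time-homogeneous) Markov chain on `G`: `w o` starts at `o`,
and conditionally on the past up to time `n` with current position `g`, the future has the
law of the chain started at `g`. -/
structure IsMarkovChain (w : G → ℕ → Ω → G) : Prop where
  start : ∀ (o : G) (ω : Ω), w o 0 ω = o
  markov : ∀ (o : G) (n : ℕ) (path : ℕ → G) (A : Set (ℕ → G)),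
    volume {ω : Ω | (∀ k ≤ n, w o k ω = path k) ∧ (fun j => w o (n + j) ω) ∈ A} =
      volume {ω : Ω | ∀ k ≤ n, w o k ω = path k} *
        volume {ω : Ω | (fun j => w (path n) j ω) ∈ A}

/-- Bounded jumps: there is a finite set `F` with `p(g,h) = 0` unless `h ∈ gF`. -/
def HasBddJumps (w : G → ℕ → Ω → G) : Prop :=
  ∃ F : Finset G, ∀ g h : G, g⁻¹ * h ∉ F → volume {ω : Ω | w g 1 ω = h} = 0

/-- Irreducibility of a Markov chain on `G`. -/
def IsIrreducibleChain (w : G → ℕ → Ω → G) : Prop :=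
  ∀ s : G, ∃ (ε : ℝ) (K : ℕ), 0 < ε ∧
    ∀ g : G, ∃ k ≤ K, ENNReal.ofReal ε ≤ volume {ω : Ω | w g k ω = g * s}

/-- `w` and `z` are independent and have the same law (independent copies). -/
def IndepSameLawChains (w z : G → ℕ → Ω → G) : Prop :=
  (∀ (p : G) (A : Set (ℕ → G)),
      volume {ω : Ω | (fun n => w p n ω) ∈ A} = volume {ω : Ω | (fun n => z p n ω) ∈ A}) ∧
    ∀ (p q : G) (A B : Set (ℕ → G)),
      volume {ω : Ω | (fun n => w p n ω) ∈ A ∧ (fun n => z q n ω) ∈ B} =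
        volume {ω : Ω | (fun n => w p n ω) ∈ A} * volume {ω : Ω | (fun n => z q n ω) ∈ B}

/-- The conclusion of [GS21, Proposition 5.1]: exponential tail for the total projection
distance undone by the chain on the cosets of `H_T(o,p)`. -/
def GSTailBound (P : ProjSystem G X x0 γ) (w : G → ℕ → Ω → G) (T C : ℝ) : Prop :=
  ∀ (o p : G) (n : ℕ) (t : ℝ), 0 < t →
    volume {ω : Ω | ∃ r ≤ n, t ≤ ∑' c : (P.HT T o p), P.dproj (c : G ⧸ γ) p (w p r ω)} ≤
      ENNReal.ofReal (C * Real.exp (-t / C))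

/-- Assumption MC: `w` is a Markov chain with bounded jumps, irreducible, satisfying the
conclusion of [GS21, Proposition 5.1] for all `T ≥ T₀'`. -/
structure AssumptionMC (P : ProjSystem G X x0 γ) (w : G → ℕ → Ω → G) (T₀' : ℝ) : Prop where
  chain : IsMarkovChain w
  bddJumps : HasBddJumps w
  irreducible : IsIrreducibleChain w
  tail : ∀ T : ℝ, T₀' ≤ T → ∃ C : ℝ, 0 < C ∧ GSTailBound P w T C

end Probability


section Aux

variable {G : Type*} [Group G] {S : Finset G}

lemma exists_word (hS : Subgroup.closure (S : Set G) = ⊤) (g : G) :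
    ∃ l : List G, (∀ x ∈ l, x ∈ S ∨ x⁻¹ ∈ S) ∧ l.prod = g := by
  have hg : g ∈ Subgroup.closure (S : Set G) := by rw [hS]; trivial
  have hg' : g ∈ Submonoid.closure ((S : Set G) ∪ (S : Set G)⁻¹) := by
    rw [← Subgroup.closure_toSubmonoid]; exact hg
  obtain ⟨l, hl, hp⟩ := Submonoid.exists_list_of_mem_closure hg'
  refine ⟨l, fun x hx => ?_, hp⟩
  rcases hl x hx with h | h
  · exact Or.inl h
  · exact Or.inr (by simpa using h)

lemma wordLength_le {l : List G} (hl : ∀ x ∈ l, x ∈ S ∨ x⁻¹ ∈ S) :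
    wordLength S l.prod ≤ l.length :=
  Nat.sInf_le ⟨l, rfl, hl, rfl⟩

lemma exists_min_word (hS : Subgroup.closure (S : Set G) = ⊤) (g : G) :
    ∃ l : List G, l.length = wordLength S g ∧ (∀ x ∈ l, x ∈ S ∨ x⁻¹ ∈ S) ∧ l.prod = g := by
  have hne : {n : ℕ | ∃ l : List G, l.length = n ∧ (∀ x ∈ l, x ∈ S ∨ x⁻¹ ∈ S) ∧
      l.prod = g}.Nonempty := by
    obtain ⟨l, h1, h2⟩ := exists_word hS g
    exact ⟨l.length, l, rfl, h1, h2⟩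
  exact Nat.sInf_mem hne

lemma wordLength_one : wordLength S (1 : G) = 0 :=
  Nat.eq_zero_of_le_zero (Nat.sInf_le ⟨[], rfl, by simp, List.prod_nil⟩)

lemma wordLength_mul_le (hS : Subgroup.closure (S : Set G) = ⊤) (g h : G) :
    wordLength S (g * h) ≤ wordLength S g + wordLength S h := by
  obtain ⟨lg, hg1, hg2, hg3⟩ := exists_min_word hS g
  obtain ⟨lh, hh1, hh2, hh3⟩ := exists_min_word hS h
  have hmem : ∀ x ∈ lg ++ lh, x ∈ S ∨ x⁻¹ ∈ S := by
    intro x hx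
    rcases List.mem_append.mp hx with h | h
    · exact hg2 x h
    · exact hh2 x h
  have := wordLength_le hmem
  rwa [List.prod_append, hg3, hh3, List.length_append, hg1, hh1] at this

lemma wordLength_inv_le (hS : Subgroup.closure (S : Set G) = ⊤) (g : G) :
    wordLength S g⁻¹ ≤ wordLength S g := by
  obtain ⟨l, h1, h2, h3⟩ := exists_min_word hS g
  have hmem : ∀ x ∈ (l.map fun y => y⁻¹).reverse, x ∈ S ∨ x⁻¹ ∈ S := by
    intro x hx
    rw [List.mem_reverse, List.mem_map] at hx
    obtain ⟨y, hy, rfl⟩ := hx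
    rcases h2 y hy with h | h
    · exact Or.inr (by simpa using h)
    · exact Or.inl h
  have := wordLength_le hmem
  rw [← List.prod_inv_reverse, h3] at this
  simpa [h1] using this

lemma ball_finite (hS : Subgroup.closure (S : Set G) = ⊤) :
    ∀ n : ℕ, {w : G | wordLength S w ≤ n}.Finite := by
  classical
  intro n
  induction n with
  | zero =>
    refine Set.Finite.subset (Set.finite_singleton (1 : G)) ?_
    intro w hw
    simp only [Set.mem_setOf_eq] at hw
    obtain ⟨l, h1, h2, h3⟩ := exists_min_word hS w
    have : l.length = 0 := by omega
    rw [List.length_eq_zero_iff] at this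
    subst this
    simp at h3
    simp [← h3]
  | succ n ih =>
    have hsub : {w : G | wordLength S w ≤ n + 1} ⊆
        {w : G | wordLength S w ≤ n} ∪
          ⋃ t ∈ (S ∪ S.image fun y => y⁻¹ : Finset G),
            (fun u => t * u) '' {w : G | wordLength S w ≤ n} := by
      intro w hw
      simp only [Set.mem_setOf_eq] at hw
      obtain ⟨l, h1, h2, h3⟩ := exists_min_word hS w
      match l, h1, h2, h3 with
      | [], h1, h2, h3 =>
        left
        simp only [Set.mem_setOf_eq]
        have : wordLength S w = 0 := by simpa using h1.symm
        omega
      | t :: l', h1, h2, h3 =>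
        right
        have ht : t ∈ (S ∪ S.image fun y => y⁻¹ : Finset G) := by
          rcases h2 t List.mem_cons_self with h | h
          · exact Finset.mem_union_left _ h
          · exact Finset.mem_union_right _ (Finset.mem_image.mpr ⟨t⁻¹, h, inv_inv t⟩)
        have hl' : wordLength S l'.prod ≤ n := by
          have := wordLength_le (fun x hx => h2 x (List.mem_cons_of_mem _ hx))
          have hlen : l'.length ≤ n := by
            have : (t :: l').length ≤ n + 1 := by omega
            simpa using this
          omega
        refine Set.mem_biUnion ht ⟨l'.prod, hl', ?_⟩
        simp [← h3, List.prod_cons]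
    exact Set.Finite.subset
      (ih.union (Set.Finite.biUnion (Finset.finite_toSet _) fun t _ => ih.image _)) hsub

lemma wordLength_single {t : G} (ht : t ∈ S ∨ t⁻¹ ∈ S) : wordLength S t ≤ 1 := by
  have := wordLength_le (l := [t]) (by simpa using ht)
  simpa using this

lemma exists_path (hS : Subgroup.closure (S : Set G) = ⊤) :
    ∀ l : List G, (∀ x ∈ l, x ∈ S ∨ x⁻¹ ∈ S) → ∀ h : G,
      ∃ α : List G, IsPath S α h (h * l.prod) ∧ α.length = l.length + 1 ∧
        ∀ p ∈ α, wordLength S (h⁻¹ * p) ≤ l.length := by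
  intro l
  induction l with
  | nil =>
    intro _ h
    refine ⟨[h], ⟨by simp, by simp, by simp, List.isChain_singleton _⟩, by simp, ?_⟩
    intro p hp
    simp only [List.mem_singleton] at hp
    subst hp
    simp [wordLength_one]
  | cons t l ih =>
    intro hl h
    obtain ⟨α, hpath, hlen, hmem⟩ := ih (fun x hx => hl x (List.mem_cons_of_mem _ hx)) (h * t)
    have ht : t ∈ S ∨ t⁻¹ ∈ S := hl t List.mem_cons_self
    refine ⟨h :: α, ⟨by simp, by simp, ?_, ?_⟩, by simp [hlen], ?_⟩
    · match α, hpath.ne with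
      | b :: β, _ =>
        rw [List.getLast?_cons_cons, hpath.last]
        congr 1
        rw [List.prod_cons, mul_assoc]
    · rw [List.Chain', List.isChain_cons]
      constructor
      · intro y hy
        rw [hpath.head] at hy
        simp only [Option.mem_def, Option.some.injEq] at hy
        subst hy
        have : wordLength S (h⁻¹ * (h * t)) ≤ 1 := by
          simpa [inv_mul_cancel_left] using wordLength_single ht
        rw [wdist]
        exact_mod_cast this.trans_eq rfl
      · exact hpath.chain
    · intro p hp
      rcases List.mem_cons.mp hp with rfl | hp'
      · simp [wordLength_one]
      · have h1 : wordLength S ((h * t)⁻¹ * p) ≤ l.length := hmem p hp'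
        have h2 : wordLength S (h⁻¹ * p) ≤ wordLength S t + wordLength S ((h * t)⁻¹ * p) := by
          have := wordLength_mul_le hS t ((h * t)⁻¹ * p)
          have he : t * ((h * t)⁻¹ * p) = h⁻¹ * p := by group
          rwa [he] at this
        have h3 := wordLength_single ht
        simp only [List.length_cons]
        omega

end Aux

/-- an `f`-divergent element is loxodromic and WPD. -/
theorem fdivergent_is_loxodromic_wpd
    {G : Type*} [Group G] (S : Finset G) (hS : Subgroup.closure (S : Set G) = ⊤)
    {X : Type*} [MetricSpace X] [MulAction G X] (x0 : X)
    (hiso : IsIsometricAction G X) (hgeo : IsGeodesicSpace X) (hhyp : IsHypSpace X)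
    (hne : NonElementaryAction G x0)
    (f : ℝ → ℝ) (hf : DivergingFun f) (g₀ : G) (hg₀ : IsFDivergent S x0 f g₀) :
    IsLoxodromic g₀ x0 ∧ IsWPD (X := X) g₀ := by
  obtain ⟨hlox, θ, π, hπ, hdiv⟩ := hg₀
  refine ⟨hlox, ?_⟩
  intro κ hκ x
  obtain ⟨a, ha, b, hab⟩ := hlox
  classical
  -- constants
  set κ₁ : ℝ := κ + 2 * dist x x0 with hκ₁def
  have hκ₁ : 0 < κ₁ := by positivity
  set Msup : NNReal := S.sup fun s => (⟨dist x0 (s • x0), dist_nonneg⟩ : NNReal)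
    with hMsupdef
  set M : ℝ := 1 + (Msup : ℝ) with hMdef
  have hM0 : 0 < M := by positivity
  have hM : ∀ t : G, (t ∈ S ∨ t⁻¹ ∈ S) → dist x0 (t • x0) ≤ M := by
    have key : ∀ s ∈ S, dist x0 (s • x0) ≤ M := by
      intro s hs
      have h1 : (⟨dist x0 (s • x0), dist_nonneg⟩ : NNReal) ≤ Msup :=
        hMsupdef ▸ Finset.le_sup (f := fun s => (⟨dist x0 (s • x0), dist_nonneg⟩ : NNReal)) hs
      have h2 : dist x0 (s • x0) ≤ (Msup : ℝ) := by exact_mod_cast h1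
      rw [hMdef]; linarith
    intro t ht
    rcases ht with h | h
    · exact key t h
    · have hk := key t⁻¹ h
      have e : dist x0 (t • x0) = dist x0 (t⁻¹ • x0) := by
        have := hiso t⁻¹ x0 (t • x0)
        rw [inv_smul_smul] at this
        rw [← this, dist_comm]
      rw [e]; exact hk
  -- displacement bounded by word length
  have hdl : ∀ u : G, dist x0 (u • x0) ≤ M * wordLength S u := by
    have hword : ∀ l : List G, (∀ x ∈ l, x ∈ S ∨ x⁻¹ ∈ S) →
        dist x0 (l.prod • x0) ≤ M * l.length := by
      intro l
      induction l with
      | nil => intro _; simp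
      | cons t l ih =>
        intro hl
        have h1 : dist x0 (t • x0) ≤ M := hM t (hl t List.mem_cons_self)
        have h2 := ih fun x hx => hl x (List.mem_cons_of_mem _ hx)
        calc dist x0 ((t :: l).prod • x0) = dist x0 ((t * l.prod) • x0) := by
              rw [List.prod_cons]
          _ ≤ dist x0 (t • x0) + dist (t • x0) ((t * l.prod) • x0) := dist_triangle _ _ _
          _ = dist x0 (t • x0) + dist x0 (l.prod • x0) := by
              rw [mul_smul, hiso t]
          _ ≤ M + M * l.length := add_le_add h1 h2
          _ = M * (t :: l).length := by
              simp only [List.length_cons]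
              push_cast
              ring
    intro u
    obtain ⟨l, h1, h2, h3⟩ := exists_min_word hS u
    have := hword l h2
    rw [h3, h1] at this
    exact this
  -- choose N
  obtain ⟨N, hN⟩ := exists_nat_ge (a * (M * θ + b + 4 * κ₁))
  have hNlow : M * θ + 4 * κ₁ ≤ a⁻¹ * (N : ℝ) - b := by
    have h1 : M * θ + b + 4 * κ₁ ≤ a⁻¹ * (N : ℝ) := by
      rw [inv_mul_eq_div, le_div_iff₀ ha]
      linarith [hN]
    linarith
  refine ⟨N, ?_⟩
  -- word for g₀ ^ N
  obtain ⟨l₀, hl₀mem, hl₀prod⟩ := exists_word hS (g₀ ^ N)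
  set L : ℕ := l₀.length with hLdef
  -- choose d₀
  have hfd := tendsto_atTop.mp hf.tendsto_atTop ((L : ℝ) + 1)
  obtain ⟨d₁, hd₁⟩ := eventually_atTop.mp hfd
  set d₀ : ℝ := max d₁ 1 with hd₀def
  have hd₀pos : 0 < d₀ := lt_of_lt_of_le one_pos (le_max_right _ _)
  have hfd₀ : (L : ℝ) + 1 ≤ f d₀ := hd₁ d₀ (le_max_left _ _)
  -- the big finite superset
  set K : ℝ := a * (b + κ₁ + M * ((L : ℝ) + d₀)) with hKdef
  set KZ : ℤ := ⌈K⌉ with hKZdef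
  set D : ℕ := ⌈(L : ℝ) + d₀⌉₊ with hDdef
  apply Set.Finite.subset (Set.Finite.biUnion (Finset.finite_toSet (Finset.Icc (-KZ) KZ))
    fun k _ => (ball_finite hS D).image fun w => g₀ ^ k * w)
  intro h hh
  obtain ⟨hh1, hh2⟩ := hh
  -- translate the two conditions to the basepoint x0
  have hb1 : dist x0 (h • x0) < κ₁ := by
    have t1 : dist x0 (h • x0) ≤ dist x0 x + dist x (h • x) + dist (h • x) (h • x0) :=
      dist_triangle4 _ _ _ _
    have t2 : dist (h • x) (h • x0) = dist x x0 := hiso h x x0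
    rw [t2] at t1
    rw [hκ₁def]
    have := dist_comm x x0
    linarith [dist_comm x0 x]
  have hb2 : dist ((g₀ ^ N) • x0) ((h * g₀ ^ N) • x0) < κ₁ := by
    have e1 : (h * g₀ ^ N) • x = h • g₀ ^ N • x := by rw [mul_smul]
    have t1 : dist ((g₀ ^ N) • x0) ((h * g₀ ^ N) • x0) ≤
        dist ((g₀ ^ N) • x0) ((g₀ ^ N) • x) + dist ((g₀ ^ N) • x) ((h * g₀ ^ N) • x)
          + dist ((h * g₀ ^ N) • x) ((h * g₀ ^ N) • x0) := dist_triangle4 _ _ _ _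
    have t2 : dist ((g₀ ^ N) • x0) ((g₀ ^ N) • x) = dist x0 x := hiso _ _ _
    have t3 : dist ((h * g₀ ^ N) • x) ((h * g₀ ^ N) • x0) = dist x x0 := hiso _ _ _
    rw [t2, t3, e1] at t1
    rw [hκ₁def]
    linarith [dist_comm x0 x, hh2]
  -- projections are close to the endpoints
  set u : G := π h with hudef
  set v : G := π (h * g₀ ^ N) with hvdef
  have hu2 : dist (u • x0) (h • x0) ≤ dist x0 (h • x0) := by
    have := (hπ h).2 1 (one_mem _)
    simpa using this
  have hu : dist x0 (u • x0) < 2 * κ₁ := by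
    have := dist_triangle x0 (h • x0) (u • x0)
    rw [dist_comm (h • x0) (u • x0)] at this
    linarith
  have hgN : g₀ ^ N ∈ Subgroup.zpowers g₀ := pow_mem (Subgroup.mem_zpowers g₀) N
  have hv2 : dist (v • x0) ((h * g₀ ^ N) • x0) ≤
      dist ((g₀ ^ N) • x0) ((h * g₀ ^ N) • x0) := (hπ (h * g₀ ^ N)).2 (g₀ ^ N) hgN
  have hv : dist ((g₀ ^ N) • x0) (v • x0) < 2 * κ₁ := by
    have := dist_triangle ((g₀ ^ N) • x0) ((h * g₀ ^ N) • x0) (v • x0)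
    rw [dist_comm ((h * g₀ ^ N) • x0) (v • x0)] at this
    linarith
  -- lower bound on the displacement of g₀ ^ N
  have hNX : a⁻¹ * (N : ℝ) - b ≤ dist ((g₀ ^ N) • x0) x0 := by
    have := (hab (N : ℤ) 0).1
    simpa [zpow_natCast, Nat.abs_cast] using this
  have hproj : a⁻¹ * (N : ℝ) - b - 4 * κ₁ ≤ dist (u • x0) (v • x0) := by
    have t1 : dist ((g₀ ^ N) • x0) x0 ≤
        dist ((g₀ ^ N) • x0) (v • x0) + dist (v • x0) (u • x0) + dist (u • x0) x0 :=
      dist_triangle4 _ _ _ _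
    rw [dist_comm (v • x0) (u • x0), dist_comm (u • x0) x0] at t1
    linarith
  -- hence the projections are far apart in word metric
  have hθ : θ ≤ wdist S u v := by
    have e : dist (u • x0) (v • x0) = dist x0 ((u⁻¹ * v) • x0) := by
      have := hiso u⁻¹ (u • x0) (v • x0)
      rw [inv_smul_smul, ← mul_smul] at this
      exact this.symm
    have h1 : a⁻¹ * (N : ℝ) - b - 4 * κ₁ ≤ M * wordLength S (u⁻¹ * v) := by
      rw [e] at hproj
      exact hproj.trans (hdl (u⁻¹ * v))
    have h2 : M * θ ≤ M * wordLength S (u⁻¹ * v) := by linarith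
    have h3 : θ ≤ (wordLength S (u⁻¹ * v) : ℝ) := le_of_mul_le_mul_left h2 hM0
    rwa [wdist]
  -- build the path and find a point close to ⟨g₀⟩
  obtain ⟨α, hα, hαlen, hαmem⟩ := exists_path hS l₀ hl₀mem h
  rw [hl₀prod] at hα
  have hnot : ¬ ∀ p ∈ α, ∀ z ∈ Subgroup.zpowers g₀, d₀ ≤ wdist S p z := by
    intro hav
    have := hdiv h (h * g₀ ^ N) hθ d₀ hd₀pos α hα hav
    rw [pathLength, hαlen] at this
    push_cast at this
    linarith
  push_neg at hnot
  obtain ⟨p, hpα, z, hz, hpz⟩ := hnot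
  obtain ⟨k, hk⟩ := Subgroup.mem_zpowers_iff.mp hz
  -- h is close to z = g₀ ^ k in the word metric
  have hwhp : wordLength S (h⁻¹ * p) ≤ L := hαmem p hpα
  have hwpz : (wordLength S (p⁻¹ * z) : ℝ) < d₀ := hpz
  have hhz : (wordLength S (h⁻¹ * z) : ℝ) < (L : ℝ) + d₀ := by
    have t1 := wordLength_mul_le hS (h⁻¹ * p) (p⁻¹ * z)
    have he : (h⁻¹ * p) * (p⁻¹ * z) = h⁻¹ * z := by group
    rw [he] at t1
    have : (wordLength S (h⁻¹ * z) : ℝ) ≤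
        (wordLength S (h⁻¹ * p) : ℝ) + (wordLength S (p⁻¹ * z) : ℝ) := by exact_mod_cast t1
    have hL : (wordLength S (h⁻¹ * p) : ℝ) ≤ (L : ℝ) := by exact_mod_cast hwhp
    linarith
  -- bound |k|
  have hdhz : dist (h • x0) (z • x0) < M * ((L : ℝ) + d₀) := by
    have e : dist (h • x0) (z • x0) = dist x0 ((h⁻¹ * z) • x0) := by
      have := hiso h⁻¹ (h • x0) (z • x0)
      rw [inv_smul_smul, ← mul_smul] at this
      exact this.symm
    rw [e]
    calc dist x0 ((h⁻¹ * z) • x0) ≤ M * wordLength S (h⁻¹ * z) := hdl _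
      _ < M * ((L : ℝ) + d₀) := by
          exact mul_lt_mul_of_pos_left hhz hM0
  have hzx : dist x0 (z • x0) < κ₁ + M * ((L : ℝ) + d₀) := by
    have := dist_triangle x0 (h • x0) (z • x0)
    linarith
  have habs : |(k : ℝ)| ≤ K := by
    have t1 := (hab k 0).1
    simp only [zpow_zero, one_smul, Int.cast_zero, sub_zero] at t1
    rw [← hk] at hzx
    rw [dist_comm] at hzx
    have t2 : a⁻¹ * |(k : ℝ)| ≤ b + κ₁ + M * ((L : ℝ) + d₀) := by
      set q := dist (g₀ ^ k • x0) x0 with hq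
      have t3 := t1.trans hzx.le
      set w := |(k : ℝ)| with hw
      linarith
    rw [hKdef]
    calc |(k : ℝ)| = a * (a⁻¹ * |(k : ℝ)|) := by field_simp
      _ ≤ a * (b + κ₁ + M * ((L : ℝ) + d₀)) := by
          exact mul_le_mul_of_nonneg_left t2 ha.le
  have hkmem : k ∈ Finset.Icc (-KZ) KZ := by
    rw [Finset.mem_Icc]
    obtain ⟨h2, h1⟩ := abs_le.mp habs
    constructor
    · have : (-KZ : ℝ) ≤ (k : ℝ) := by
        rw [hKZdef]
        push_cast
        linarith [Int.le_ceil K]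
      exact_mod_cast this
    · have : (k : ℝ) ≤ (KZ : ℝ) := by
        rw [hKZdef]
        push_cast
        linarith [Int.le_ceil K]
      exact_mod_cast this
  -- conclude the membership
  have hwinv : wordLength S ((g₀ ^ k)⁻¹ * h) ≤ D := by
    have e : (g₀ ^ k)⁻¹ * h = (h⁻¹ * z)⁻¹ := by rw [hk]; group
    have t1 := wordLength_inv_le hS (h⁻¹ * z)
    have t2 : (wordLength S ((h⁻¹ * z)⁻¹) : ℝ) < (L : ℝ) + d₀ := by
      have : (wordLength S ((h⁻¹ * z)⁻¹) : ℝ) ≤ (wordLength S (h⁻¹ * z) : ℝ) := by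
        exact_mod_cast t1
      linarith
    have t3 : (wordLength S ((g₀ ^ k)⁻¹ * h) : ℝ) ≤ (D : ℝ) := by
      rw [e]
      exact t2.le.trans (Nat.le_ceil _)
    exact_mod_cast t3
  refine Set.mem_biUnion hkmem ?_
  exact ⟨(g₀ ^ k)⁻¹ * h, hwinv, by group⟩

end RandomDivergence
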